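/- Let Ξ be a minimal and aperiodic right-infinite subshift over a finite alphabet with language ℒ. The map φ⁽¹⁾ : H̃⁽¹⁾ → H⁽¹⁾ is always surjective, and it is injective if and only if Ξ is right-special balanced. -/

import Mathlib

open scoped ENNReal Classical

noncomputable section

namespace Arx1111

variable {A : Type*}

/-! ### Words and infinite words -/

/-- The left shift on right-infinite words. -/
def shift (ξ : ℕ → A) : ℕ → A := fun n => ξ (n + 1)

/-- The finite word `u` occurs in the infinite word `ξ` at position `k`. -/
def FactorAt (u : List A) (ξ : ℕ → A) (k : ℕ) : Prop :=
  u = (List.range u.length).map fun i => ξ (k + i)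

/-- `u` is a factor of the infinite word `ξ`. -/
def IsFactorOf (u : List A) (ξ : ℕ → A) : Prop := ∃ k, FactorAt u ξ k

/-- `u` is a prefix of the infinite word `ξ`. -/
def PrefixOfInf (u : List A) (ξ : ℕ → A) : Prop := FactorAt u ξ 0

/-- `u` is a proper prefix of `v`. -/
def PPrefix (u v : List A) : Prop := u <+: v ∧ u ≠ v

/-- The `n`-th power `u^n` of a finite word `u`. -/
def wordPow (u : List A) : ℕ → List A
  | 0 => []
  | n + 1 => u ++ wordPow u n

/-- The language of a set of infinite words: all finite factors of its elements. -/
def language (Ξ : Set (ℕ → A)) : Set (List A) := {u | ∃ ξ ∈ Ξ, IsFactorOf u ξ}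

/-! ### Subshifts -/

/-- `Ξ` is a (right-infinite) subshift: nonempty, closed, shift-invariant. -/
structure IsSubshift [TopologicalSpace A] (Ξ : Set (ℕ → A)) : Prop where
  nonempty : Ξ.Nonempty
  isClosed : IsClosed Ξ
  shift_mem : ∀ ξ ∈ Ξ, shift ξ ∈ Ξ

/-- Minimality: every orbit is dense in `Ξ`. -/
def IsMinimal [TopologicalSpace A] (Ξ : Set (ℕ → A)) : Prop :=
  ∀ ξ ∈ Ξ, Ξ ⊆ closure (Set.range fun n => shift^[n] ξ)

/-- Aperiodicity. -/
def Aperiodic (Ξ : Set (ℕ → A)) : Prop :=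
  ∀ ξ ∈ Ξ, ∀ n : ℕ, shift^[n] ξ = ξ → n = 0

/-! ### Occurrences, complete first returns, privileged words -/

variable [DecidableEq A]

/-- The number of occurrences of `u` as a factor of `w`. -/
def occCount (u w : List A) : ℕ :=
  ((List.range (w.length + 1)).filter fun k => (w.drop k).take u.length == u).length

/-- `u'` is a complete first return to `u`: if `u` is empty, `u'` is a single letter;
otherwise `u` is a prefix and a suffix of `u'` and occurs exactly twice in `u'`. -/
def IsCFR (u u' : List A) : Prop :=
  if u = [] then u'.length = 1
  else u <+: u' ∧ u <:+ u' ∧ occCount u u' = 2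

/-- Privileged words of order `n`. -/
inductive PrivOrder : ℕ → List A → Prop where
  | zero : PrivOrder 0 []
  | succ {n : ℕ} {u u' : List A} : PrivOrder n u → IsCFR u u' → PrivOrder (n + 1) u'

/-- A word is privileged if it is privileged of some order. -/
def IsPrivileged (u : List A) : Prop := ∃ n, PrivOrder n u

/-- `u'` is a complete first return to `u` inside the language `L`. -/
def CFRin (L : Set (List A)) (u u' : List A) : Prop := u' ∈ L ∧ IsCFR u u'

/-- `u` is right-special for the language `L`. -/
def RightSpecial (L : Set (List A)) (u : List A) : Prop :=
  u ∈ L ∧ ∃ a b : A, a ≠ b ∧ u ++ [a] ∈ L ∧ u ++ [b] ∈ L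

/-- `a(v)`: number of one-letter right extensions of `v` in `L`, minus one. -/
def aext (L : Set (List A)) (v : List A) : ℕ := Nat.card {a : A // v ++ [a] ∈ L} - 1

/-- `ã(v)`: number of complete first returns to `v` in `L`, minus one, if `v` is
privileged, and `0` otherwise. -/
def atil (L : Set (List A)) (v : List A) : ℕ :=
  if IsPrivileged v then Nat.card {u' : List A // CFRin L v u'} - 1 else 0

/-- `S(u)`: right-special words `r` with `u ⪯ r ≺ u'` for some complete first return `u'`. -/
def Sset (L : Set (List A)) (u : List A) : Set (List A) :=
  {r | RightSpecial L r ∧ ∃ u', CFRin L u u' ∧ u <+: r ∧ PPrefix r u'}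

/-- Right-special balanced: between a privileged word and any of its complete first
returns there is exactly one right-special word. -/
def RSBalanced (L : Set (List A)) : Prop :=
  ∀ u, IsPrivileged u → u ∈ L → ∀ u', CFRin L u u' →
    ∃! r, RightSpecial L r ∧ u <+: r ∧ PPrefix r u'

/-- `r'` is the shortest right-special word having `r` as a proper prefix. -/
def IsShortestRSExt (L : Set (List A)) (r r' : List A) : Prop :=
  RightSpecial L r' ∧ PPrefix r r' ∧
    ∀ r'', RightSpecial L r'' → PPrefix r r'' → r'.length ≤ r''.length

/-- `r = φ⁽⁰⁾(u)`: `r` is the shortest right-special word having `u` as a prefix. -/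
def IsPhi0 (L : Set (List A)) (u r : List A) : Prop :=
  RightSpecial L r ∧ u <+: r ∧ ∀ r', RightSpecial L r' → u <+: r' → r.length ≤ r'.length

/-- `H⁽¹⁾`: pairs of distinct one-letter right extensions of a common word. -/
def H1 (L : Set (List A)) (v₁ v₂ : List A) : Prop :=
  v₁ ∈ L ∧ v₂ ∈ L ∧ v₁ ≠ v₂ ∧ ∃ (w : List A) (a b : A), v₁ = w ++ [a] ∧ v₂ = w ++ [b]

/-- `H̃⁽¹⁾`: pairs of distinct complete first returns to a common privileged word. -/
def TildeH1 (L : Set (List A)) (u₁ u₂ : List A) : Prop :=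
  u₁ ≠ u₂ ∧ ∃ u, IsPrivileged u ∧ CFRin L u u₁ ∧ CFRin L u u₂

/-- Length of the longest common prefix of two finite words. -/
def lcpLenW (u v : List A) : ℕ := sSup {n | n ≤ u.length ∧ u.take n = v.take n}

/-- Length of the longest common privileged prefix of two finite words. -/
def weeLenW (u v : List A) : ℕ :=
  sSup {n | ∃ w : List A, IsPrivileged w ∧ w.length = n ∧ w <+: u ∧ w <+: v}

/-- `φ⁽¹⁾`: the pair of one-letter extensions of `u₁ ∧ u₂` which are prefixes of
`u₁` resp. `u₂`. -/
def phi1 (u₁ u₂ : List A) : List A × List A :=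
  (u₁.take (lcpLenW u₁ u₂ + 1), u₂.take (lcpLenW u₁ u₂ + 1))

/-! ### Bounded powers and repulsiveness -/

/-- Bounded powers: there is `p` such that no `(p+1)`-th power of a nonempty word
belongs to `L`. -/
def BoundedPowers (L : Set (List A)) : Prop :=
  ∃ p : ℕ, ∀ u ∈ L, u ≠ [] → wordPow u (p + 1) ∉ L

/-- The set of ratios `(|W|-|w|)/|w|` over words `w, W ∈ L` with `w` a nonempty proper
prefix and a suffix of `W`. -/
def repulsionSet (L : Set (List A)) : Set ℝ :=
  {x | ∃ w W : List A, w ∈ L ∧ W ∈ L ∧ w ≠ [] ∧ PPrefix w W ∧ w <:+ W ∧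
        x = ((W.length : ℝ) - (w.length : ℝ)) / (w.length : ℝ)}

/-- The index of repulsiveness `ℓ`. -/
def repulsionIndex (L : Set (List A)) : ℝ := sInf (repulsionSet L)

/-- Repulsive: `ℓ > 0`. -/
def Repulsive (L : Set (List A)) : Prop := 0 < repulsionIndex L

/-! ### Privileged prefixes of infinite words -/

/-- The `n`-th privileged prefix `ξ̃ₙ` of an infinite word `ξ`. -/
def privPrefix (ξ : ℕ → A) : ℕ → List A
  | 0 => []
  | n + 1 =>
    if h : ∃ u', IsCFR (privPrefix ξ n) u' ∧ PrefixOfInf u' ξ then h.choose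
    else privPrefix ξ n

/-- The order `ind(ξ ⩏ η)` of the longest common privileged prefix of two infinite
words; the word `ξ ⩏ η` itself is `privPrefix ξ (weeInd ξ η)`. -/
def weeInd (ξ η : ℕ → A) : ℕ := sSup {n | privPrefix ξ n = privPrefix η n}

/-- Length of the longest common prefix `ξ ∧ η` of two distinct infinite words. -/
def lcpLenInf (ξ η : ℕ → A) : ℕ := sInf {n | ξ n ≠ η n}

/-! ### Choice functions, weight functions and the metrics -/

/-- A choice function for `Ξ`. -/
def IsChoiceFun (Ξ : Set (ℕ → A)) (τ : List A → ℕ → A) : Prop :=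
  (∀ v ∈ language Ξ, τ v ∈ Ξ ∧ PrefixOfInf v (τ v)) ∧
  (∀ v ∈ language Ξ, ∀ w ∈ language Ξ, v.length < w.length →
    PrefixOfInf w (τ v) → τ w = τ v)

/-- A weight function. -/
structure IsWeight (δ : ℕ → ℝ) : Prop where
  pos : ∀ n, 0 < δ n
  strictAnti : StrictAnti δ
  tendsto_zero : Filter.Tendsto δ Filter.atTop (nhds 0)
  submul : ∃ c : ℝ, 0 < c ∧ ∀ a b : ℕ, δ (a * b) ≤ c * δ a * δ b
  doubling : ∃ c : ℝ, 0 < c ∧ ∀ a : ℕ, c * δ a ≤ δ (2 * a)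

variable [TopologicalSpace A]

/-- The metric `d_τ` associated to the right-special horizontal edges. -/
def dTau (Ξ : Set (ℕ → A)) (δ : ℕ → ℝ) (τ : List A → ℕ → A) (ξ η : ℕ → A) : ℝ≥0∞ :=
  ⨆ f : {f : (ℕ → A) → ℝ // ContinuousOn f Ξ ∧
      ∀ v₁ v₂, H1 (language Ξ) v₁ v₂ → |f (τ v₁) - f (τ v₂)| ≤ δ (lcpLenW v₁ v₂)},
    ENNReal.ofReal |f.1 ξ - f.1 η|

/-- The metric `d̃_τ` associated to the privileged horizontal edges. -/
def dTilTau (Ξ : Set (ℕ → A)) (δ : ℕ → ℝ) (τ : List A → ℕ → A) (ξ η : ℕ → A) : ℝ≥0∞ :=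
  ⨆ f : {f : (ℕ → A) → ℝ // ContinuousOn f Ξ ∧
      ∀ u₁ u₂, TildeH1 (language Ξ) u₁ u₂ → |f (τ u₁) - f (τ u₂)| ≤ δ (weeLenW u₁ u₂)},
    ENNReal.ofReal |f.1 ξ - f.1 η|

/-- `d_inf`. -/
def dInf (Ξ : Set (ℕ → A)) (δ : ℕ → ℝ) (ξ η : ℕ → A) : ℝ≥0∞ :=
  ⨅ τ : {τ // IsChoiceFun Ξ τ}, dTau Ξ δ τ.1 ξ η

/-- `d_sup`. -/
def dSup (Ξ : Set (ℕ → A)) (δ : ℕ → ℝ) (ξ η : ℕ → A) : ℝ≥0∞ :=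
  ⨆ τ : {τ // IsChoiceFun Ξ τ}, dTau Ξ δ τ.1 ξ η

/-- `d̃_inf`. -/
def dTilInf (Ξ : Set (ℕ → A)) (δ : ℕ → ℝ) (ξ η : ℕ → A) : ℝ≥0∞ :=
  ⨅ τ : {τ // IsChoiceFun Ξ τ}, dTilTau Ξ δ τ.1 ξ η

/-- `d̃_sup`. -/
def dTilSup (Ξ : Set (ℕ → A)) (δ : ℕ → ℝ) (ξ η : ℕ → A) : ℝ≥0∞ :=
  ⨆ τ : {τ // IsChoiceFun Ξ τ}, dTilTau Ξ δ τ.1 ξ η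

/-- `β̃_τ(ξ̃ₙ)`: equals `1` if the longest common privileged prefix of `τ(ξ̃ₙ)` and `ξ`
is `ξ̃ₙ`, and `0` otherwise. -/
def btil (τ : List A → ℕ → A) (ξ : ℕ → A) (n : ℕ) : ℝ≥0∞ :=
  if privPrefix (τ (privPrefix ξ n)) (weeInd (τ (privPrefix ξ n)) ξ) = privPrefix ξ n
  then 1 else 0

/-! ### Zeta functions -/

/-- `ζ_k(s)` (with the convention `0⁰ = 0`). -/
def zeta (L : Set (List A)) (δ : ℕ → ℝ) (k : ℕ) (s : ℝ) : ℝ≥0∞ :=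
  ∑' v : L, (if aext L (v : List A) = 0 then 0 else ((aext L (v : List A) : ℝ≥0∞)) ^ k) *
    ENNReal.ofReal (δ (v : List A).length ^ s)

/-- `ζ̃_k(s)` (with the convention `0⁰ = 0`). -/
def zetaTil (L : Set (List A)) (δ : ℕ → ℝ) (k : ℕ) (s : ℝ) : ℝ≥0∞ :=
  ∑' v : L, (if atil L (v : List A) = 0 then 0 else ((atil L (v : List A) : ℝ≥0∞)) ^ k) *
    ENNReal.ofReal (δ (v : List A).length ^ s)

/-- Almost finite privileged rank. -/
def AlmostFiniteRank (L : Set (List A)) : Prop :=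
  ∃ a b : ℝ, 0 < a ∧ 0 < b ∧ ∀ u, IsPrivileged u → u ∈ L → 2 ≤ u.length →
    (Nat.card {u' : List A // CFRin L u u'} : ℝ) ≤ a * (Real.log u.length) ^ b



/-! ### Auxiliary lemmas -/

section Aux

set_option linter.unusedSectionVars false

variable [DecidableEq A]

/-- `u` occurs in `w` at position `j`. -/
def Occ (u w : List A) (j : ℕ) : Prop := (w.drop j).take u.length = u

lemma length_filter_range (n : ℕ) (p : ℕ → Bool) :
    (List.filter p (List.range n)).length =
      ((Finset.range n).filter (fun k => p k = true)).card := by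
  induction n with
  | zero => simp
  | succ n ih =>
    rw [List.range_succ, List.filter_append, List.length_append, ih, Finset.range_add_one,
      Finset.filter_insert]
    by_cases h : p n = true <;> simp [h, Finset.card_insert_of_notMem]

lemma occCount_eq_card (u w : List A) :
    occCount u w = ((Finset.range (w.length + 1)).filter (fun k => Occ u w k)).card := by
  rw [occCount, length_filter_range]
  congr 1
  apply Finset.filter_congr
  intro k _
  simp [Occ]

lemma occ_le {u w : List A} (hu : u ≠ []) {j : ℕ} (h : Occ u w j) :
    j + u.length ≤ w.length := by
  have hl := congrArg List.length h
  simp only [List.length_take, List.length_drop] at hl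
  have hu' : 0 < u.length := List.length_pos_iff.mpr hu
  omega

lemma occ_getElem {u w : List A} {j : ℕ} (h : Occ u w j) {i : ℕ} (hi : i < u.length)
    (hw : j + i < w.length) : u[i] = w[j + i] := by
  rw [List.getElem_of_eq h.symm hi, List.getElem_take, List.getElem_drop]

lemma occ_of_getElem {u w : List A} {j : ℕ} (hle : j + u.length ≤ w.length)
    (h : ∀ i (hi : i < u.length), u[i] = w[j + i]'(by omega)) : Occ u w j := by
  apply List.ext_getElem
  · simp only [List.length_take, List.length_drop]; omega
  · intro i h1 h2
    rw [List.getElem_take, List.getElem_drop]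
    exact (h i h2).symm

lemma occ_zero_iff {u w : List A} : Occ u w 0 ↔ u <+: w := by
  rw [Occ, List.drop_zero]
  constructor
  · intro h; rw [← h]; exact List.take_prefix _ _
  · intro h
    obtain ⟨t, rfl⟩ := h
    simp

lemma occ_suffix {u w : List A} (h : u <:+ w) : Occ u w (w.length - u.length) := by
  obtain ⟨t, rfl⟩ := h
  simp [Occ, List.drop_left']

lemma suffix_of_occ {u w : List A} (hu : u ≠ []) (h : Occ u w (w.length - u.length)) :
    u <:+ w := by
  have hle := occ_le hu h
  rw [Occ] at h
  rw [← h]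
  have : (w.drop (w.length - u.length)).length = u.length := by
    simp [List.length_drop]; omega
  rw [List.take_of_length_le (le_of_eq this)]
  exact List.drop_suffix _ _

lemma occ_of_prefix {u w W : List A} {j : ℕ} (hu : u ≠ []) (h : Occ u w j) (hp : w <+: W) :
    Occ u W j := by
  have hle := occ_le hu h
  have hlen := hp.length_le
  apply occ_of_getElem (by omega)
  intro i hi
  exact (occ_getElem h hi (by omega)).trans (hp.getElem (by omega))

lemma occ_take {u w : List A} {j n : ℕ} (hle : j + u.length ≤ n) (hn : n ≤ w.length)
    (h : Occ u w j) : Occ u (w.take n) j := by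
  apply occ_of_getElem (by simpa [List.length_take] using by omega)
  intro i hi
  rw [List.getElem_take]
  exact occ_getElem h hi (by omega)

lemma occ_trans {u w W : List A} {j k : ℕ} (hu : u ≠ []) (hw : w ≠ [])
    (h : Occ u w j) (h' : Occ w W k) : Occ u W (k + j) := by
  have h1 := occ_le hu h
  have h2 := occ_le hw h'
  apply occ_of_getElem (by omega)
  intro i hi
  simp only [Nat.add_assoc]
  exact (occ_getElem h hi (by omega)).trans (occ_getElem h' (by omega) (by omega))

lemma occ_append_elim {u r : List A} {b : A} {j : ℕ} (hu : u ≠ [])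
    (h : Occ u (r ++ [b]) j) (hr : ∀ i, Occ u r i → i = 0) :
    j = 0 ∨ j = (r ++ [b]).length - u.length := by
  have hle := occ_le hu h
  simp only [List.length_append, List.length_singleton] at hle ⊢
  by_cases hc : j + u.length ≤ r.length
  · left
    apply hr
    apply occ_of_getElem hc
    intro i hi
    exact (occ_getElem h hi (by simp [List.length_append]; omega)).trans
      (List.getElem_append_left (by omega))
  · right; omega


lemma occCount_self {u : List A} (hu : u ≠ []) : occCount u u = 1 := by
  rw [occCount_eq_card]
  have : (Finset.range (u.length + 1)).filter (fun k => Occ u u k) = {0} := by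
    ext k
    simp only [Finset.mem_filter, Finset.mem_range, Finset.mem_singleton]
    constructor
    · rintro ⟨_, hk⟩
      have := occ_le hu hk
      have : 0 < u.length := List.length_pos_iff.mpr hu
      omega
    · rintro rfl
      exact ⟨by omega, occ_zero_iff.mpr (List.prefix_refl _)⟩
  rw [this, Finset.card_singleton]

lemma isCFR_of_ne {u w : List A} (hu : u ≠ []) :
    IsCFR u w ↔ u <+: w ∧ u <:+ w ∧ occCount u w = 2 := by
  rw [IsCFR, if_neg hu]

lemma cfr_prefix {u w : List A} (hu : u ≠ []) (h : IsCFR u w) : u <+: w :=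
  ((isCFR_of_ne hu).mp h).1

lemma cfr_suffix {u w : List A} (hu : u ≠ []) (h : IsCFR u w) : u <:+ w :=
  ((isCFR_of_ne hu).mp h).2.1

lemma cfr_length_lt {u w : List A} (hu : u ≠ []) (h : IsCFR u w) :
    u.length < w.length := by
  obtain ⟨h1, h2, h3⟩ := (isCFR_of_ne hu).mp h
  rcases lt_or_eq_of_le h1.length_le with h4 | h4
  · exact h4
  · exfalso
    have : u = w := List.IsPrefix.eq_of_length h1 h4
    rw [← this, occCount_self hu] at h3
    omega

lemma cfr_occ_iff {u w : List A} (hu : u ≠ []) (h : IsCFR u w) (j : ℕ) :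
    Occ u w j ↔ j = 0 ∨ j = w.length - u.length := by
  obtain ⟨h1, h2, h3⟩ := (isCFR_of_ne hu).mp h
  have hlt := cfr_length_lt hu h
  have he : w.length - u.length ≠ 0 := by omega
  constructor
  · intro hj
    have hsub : ({0, w.length - u.length} : Finset ℕ) ⊆
        (Finset.range (w.length + 1)).filter (fun k => Occ u w k) := by
      intro x hx
      simp only [Finset.mem_insert, Finset.mem_singleton] at hx
      rcases hx with rfl | rfl
      · exact Finset.mem_filter.mpr ⟨Finset.mem_range.mpr (by omega),
          occ_zero_iff.mpr h1⟩
      · exact Finset.mem_filter.mpr ⟨Finset.mem_range.mpr (by omega), occ_suffix h2⟩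
    have hcard : ({0, w.length - u.length} : Finset ℕ).card = 2 := by
      rw [Finset.card_insert_of_notMem (by simp [Ne.symm he]), Finset.card_singleton]
    have heq : (Finset.range (w.length + 1)).filter (fun k => Occ u w k) =
        ({0, w.length - u.length} : Finset ℕ) :=
      (Finset.eq_of_subset_of_card_le hsub (by rw [hcard, ← occCount_eq_card, h3])).symm
    have hj' : j ∈ (Finset.range (w.length + 1)).filter (fun k => Occ u w k) := by
      refine Finset.mem_filter.mpr ⟨Finset.mem_range.mpr ?_, hj⟩
      have := occ_le hu hj
      omega
    rw [heq] at hj'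
    simpa using hj'
  · rintro (rfl | rfl)
    · exact occ_zero_iff.mpr h1
    · exact occ_suffix h2

lemma isCFR_of_occ {u w : List A} (hu : u ≠ []) (h1 : u <+: w) (h2 : u <:+ w)
    (hlt : u.length < w.length) (hall : ∀ j, Occ u w j → j = 0 ∨ j = w.length - u.length) :
    IsCFR u w := by
  rw [isCFR_of_ne hu]
  refine ⟨h1, h2, ?_⟩
  rw [occCount_eq_card]
  have : (Finset.range (w.length + 1)).filter (fun k => Occ u w k) =
      ({0, w.length - u.length} : Finset ℕ) := by
    ext k
    simp only [Finset.mem_filter, Finset.mem_range, Finset.mem_insert, Finset.mem_singleton]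
    constructor
    · rintro ⟨_, hk⟩; exact hall k hk
    · rintro (rfl | rfl)
      · exact ⟨by omega, occ_zero_iff.mpr h1⟩
      · exact ⟨by omega, occ_suffix h2⟩
  rw [this, Finset.card_insert_of_notMem (by simp; omega), Finset.card_singleton]

lemma cfr_not_prefix {u w₁ w₂ : List A} (hu : u ≠ []) (h1 : IsCFR u w₁)
    (h2 : IsCFR u w₂) (hne : w₁ ≠ w₂) : ¬ w₁ <+: w₂ := by
  intro hp
  have hl1 := cfr_length_lt hu h1
  have hl2 := cfr_length_lt hu h2
  have hlt : w₁.length < w₂.length := by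
    rcases lt_or_eq_of_le hp.length_le with h | h
    · exact h
    · exact absurd (List.IsPrefix.eq_of_length hp h) hne
  have hocc : Occ u w₂ (w₁.length - u.length) :=
    occ_of_prefix hu (occ_suffix (cfr_suffix hu h1)) hp
  rcases (cfr_occ_iff hu h2 _).mp hocc with h | h <;> omega


/-! ### Longest common prefix -/

lemma take_succ_eq {u : List A} {l : ℕ} (h : l < u.length) :
    u.take (l + 1) = u.take l ++ [u[l]] := by
  rw [List.take_succ, List.getElem?_eq_getElem h]
  rfl

lemma lcpLenW_eq {u v : List A} {l : ℕ} (h : u.take l = v.take l) (h1 : l < u.length)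
    (h2 : l < v.length) (hne : u[l] ≠ v[l]) : lcpLenW u v = l := by
  have hbdd : BddAbove {n | n ≤ u.length ∧ u.take n = v.take n} :=
    ⟨u.length, fun n hn => hn.1⟩
  apply le_antisymm
  · apply csSup_le ⟨0, by simp⟩
    intro n hn
    by_contra hc
    push_neg at hc
    apply hne
    have e1 : u[l] = (u.take n)[l]'(by simp [List.length_take]; omega) :=
      (List.getElem_take ..).symm
    have e2 : (v.take n)[l]'(by simp [List.length_take]; omega) = v[l] :=
      List.getElem_take ..
    rw [e1, List.getElem_of_eq hn.2 _, e2]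
  · exact le_csSup hbdd ⟨le_of_lt h1, h⟩

lemma lcpLenW_ge {u v w : List A} (h1 : w <+: u) (h2 : w <+: v) :
    w.length ≤ lcpLenW u v := by
  apply le_csSup ⟨u.length, fun n hn => hn.1⟩
  exact ⟨h1.length_le, by rw [← List.prefix_iff_eq_take.mp h1, ← List.prefix_iff_eq_take.mp h2]⟩

lemma lcp_spec {u v : List A} (hnp : ¬ u <+: v) (hnp' : ¬ v <+: u) :
    lcpLenW u v < u.length ∧ lcpLenW u v < v.length ∧
      u.take (lcpLenW u v) = v.take (lcpLenW u v) ∧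
      ∀ (h1 : lcpLenW u v < u.length) (h2 : lcpLenW u v < v.length),
        u[lcpLenW u v] ≠ v[lcpLenW u v] := by
  have hbdd : BddAbove {n | n ≤ u.length ∧ u.take n = v.take n} :=
    ⟨u.length, fun n hn => hn.1⟩
  have hne : {n | n ≤ u.length ∧ u.take n = v.take n}.Nonempty := ⟨0, by simp⟩
  have hmem : lcpLenW u v ≤ u.length ∧ u.take (lcpLenW u v) = v.take (lcpLenW u v) :=
    Nat.sSup_mem hne hbdd
  obtain ⟨hle, htake⟩ := hmem
  have h1 : lcpLenW u v < u.length := by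
    rcases lt_or_eq_of_le hle with h | h
    · exact h
    · exfalso
      apply hnp
      have heq : u = v.take (lcpLenW u v) := by rw [← htake, h, List.take_length]
      rw [heq]
      exact List.take_prefix _ _
  have h2 : lcpLenW u v < v.length := by
    by_contra hc
    push_neg at hc
    apply hnp'
    have heq : v = (u.take (lcpLenW u v)).take v.length := by
      rw [htake, List.take_take, min_eq_left hc, List.take_length]
    rw [heq]
    exact (List.take_prefix _ _).trans (List.take_prefix _ _)
  refine ⟨h1, h2, htake, fun _ _ hc => ?_⟩
  have : lcpLenW u v + 1 ≤ lcpLenW u v := by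
    apply le_csSup hbdd
    refine ⟨by omega, ?_⟩
    rw [take_succ_eq h1, take_succ_eq h2, htake, hc]
  omega

/-! ### Privileged words -/

lemma nil_privileged : IsPrivileged ([] : List A) := ⟨0, .zero⟩

lemma singleton_privileged (a : A) : IsPrivileged [a] :=
  ⟨1, .succ .zero (by rw [IsCFR, if_pos rfl]; rfl)⟩

lemma privileged_destruct {w : List A} (hw : IsPrivileged w) (hne : w ≠ []) :
    ∃ p, IsPrivileged p ∧ IsCFR p w := by
  obtain ⟨n, hn⟩ := hw
  cases hn with
  | zero => exact absurd rfl hne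
  | succ hp hcfr => exact ⟨_, ⟨_, hp⟩, hcfr⟩

lemma privileged_of_cfr {p w : List A} (hp : IsPrivileged p) (h : IsCFR p w) :
    IsPrivileged w := by
  obtain ⟨n, hn⟩ := hp
  exact ⟨n + 1, .succ hn h⟩

lemma cfr_nil_length {w : List A} (h : IsCFR [] w) : w.length = 1 := by
  rwa [IsCFR, if_pos rfl] at h

lemma priv_prefix_suffix_aux : ∀ (n : ℕ) (w : List A), w.length ≤ n → IsPrivileged w →
    ∀ u, IsPrivileged u → u <+: w → u ≠ w → u <:+ w := by
  intro n
  induction n with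
  | zero =>
    intro w hw _ u hu hpre hne
    interval_cases h : w.length
    · rw [List.length_eq_zero_iff] at h
      subst h
      exact absurd (List.prefix_nil.mp hpre) hne
  | succ n ih =>
    intro w hwlen hwpriv u hupriv hpre hne
    by_cases hu0 : u = []
    · subst hu0; exact List.nil_suffix
    have hult : u.length < w.length := by
      rcases lt_or_eq_of_le hpre.length_le with h | h
      · exact h
      · exact absurd (List.IsPrefix.eq_of_length hpre h) hne
    have hw0 : w ≠ [] := by
      intro h; subst h; simp at hult
    obtain ⟨p, hppriv, hpcfr⟩ := privileged_destruct hwpriv hw0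
    by_cases hp0 : p = []
    · subst hp0
      have := cfr_nil_length hpcfr
      have : 0 < u.length := List.length_pos_iff.mpr hu0
      omega
    have hppre := cfr_prefix hp0 hpcfr
    have hpsuf := cfr_suffix hp0 hpcfr
    have hplt := cfr_length_lt hp0 hpcfr
    rcases le_or_gt u.length p.length with hle | hlt
    · have hup : u <+: p := List.prefix_of_prefix_length_le hpre hppre hle
      by_cases hupeq : u = p
      · subst hupeq; exact hpsuf
      · exact (ih p (by omega) hppriv u hupriv hup hupeq).trans hpsuf
    · exfalso
      have hpu : p <+: u := List.prefix_of_prefix_length_le hppre hpre (by omega)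
      have hpune : p ≠ u := by
        intro h; subst h; omega
      have hsuf : p <:+ u := ih u (by omega) hupriv p hppriv hpu hpune
      have hocc : Occ p w (u.length - p.length) :=
        occ_of_prefix hp0 (occ_suffix hsuf) hpre
      rcases (cfr_occ_iff hp0 hpcfr _).mp hocc with h | h <;> omega

lemma priv_prefix_suffix {w u : List A} (hw : IsPrivileged w) (hu : IsPrivileged u)
    (hpre : u <+: w) (hne : u ≠ w) : u <:+ w :=
  priv_prefix_suffix_aux w.length w le_rfl hw u hu hpre hne

lemma exists_good_priv_prefix {w : List A} (hw : w ≠ []) :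
    ∃ u : List A, IsPrivileged u ∧ u ≠ [] ∧ u <+: w ∧ ∀ j, Occ u w j → j = 0 := by
  classical
  set T := {n | ∃ u : List A, IsPrivileged u ∧ u.length = n ∧ u <+: w} with hT
  have h1T : 1 ∈ T := by
    obtain ⟨a, t, rfl⟩ := List.exists_cons_of_ne_nil hw
    exact ⟨[a], singleton_privileged a, rfl, ⟨t, rfl⟩⟩
  have hbdd : BddAbove T := ⟨w.length, fun n hn => by
    obtain ⟨u, _, rfl, hpre⟩ := hn; exact hpre.length_le⟩
  obtain ⟨u, hupriv, hulen, hupre⟩ := Nat.sSup_mem ⟨1, h1T⟩ hbdd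
  have hN1 : 1 ≤ sSup T := le_csSup hbdd h1T
  have hu0 : u ≠ [] := by
    intro h; subst h; simp at hulen; omega
  refine ⟨u, hupriv, hu0, hupre, ?_⟩
  by_contra hc
  push_neg at hc
  obtain ⟨j, hocc, hj0⟩ := hc
  have hex : ∃ k, 0 < k ∧ Occ u w k := ⟨j, Nat.pos_of_ne_zero hj0, hocc⟩
  set J := Nat.find hex with hJ
  obtain ⟨hJ0, hJocc⟩ := Nat.find_spec hex
  have hJle : J + u.length ≤ w.length := occ_le hu0 hJocc
  set w' := w.take (J + u.length) with hw'
  have hw'len : w'.length = J + u.length := by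
    rw [hw', List.length_take]; omega
  have hw'pre : w' <+: w := List.take_prefix _ _
  have hupre' : u <+: w' := by
    apply List.prefix_iff_eq_take.mpr
    rw [hw', List.take_take, min_eq_left (by omega)]
    exact List.prefix_iff_eq_take.mp hupre
  have hcfr : IsCFR u w' := by
    apply isCFR_of_occ hu0 hupre'
    · apply suffix_of_occ hu0
      have heq : w'.length - u.length = J := by omega
      rw [heq]
      exact occ_take le_rfl hJle hJocc
    · omega
    · intro j' hocc'
      have hj'w : Occ u w j' := occ_of_prefix hu0 hocc' hw'pre
      have hj'le := occ_le hu0 hocc'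
      rw [hw'len] at hj'le
      by_cases hj'0 : j' = 0
      · left; exact hj'0
      · right
        have : J ≤ j' := Nat.find_le ⟨Nat.pos_of_ne_zero hj'0, hj'w⟩
        omega
  have : J + u.length ∈ T := ⟨w', privileged_of_cfr hupriv hcfr, hw'len, hw'pre⟩
  have := le_csSup hbdd this
  omega


/-! ### Infinite words, prefixes, recurrence -/

/-- The length-`n` prefix of an infinite word. -/
def pref (ξ : ℕ → A) (n : ℕ) : List A := (List.range n).map ξ

@[simp] lemma pref_length (ξ : ℕ → A) (n : ℕ) : (pref ξ n).length = n := by simp [pref]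

lemma pref_getElem (ξ : ℕ → A) {n i : ℕ} (h : i < n) :
    (pref ξ n)[i]'(by simp [pref, h]) = ξ i := by
  simp [pref]

lemma factorAt_getElem {u : List A} {ξ : ℕ → A} {k : ℕ} (h : FactorAt u ξ k) {i : ℕ}
    (hi : i < u.length) : u[i] = ξ (k + i) := by
  rw [List.getElem_of_eq h hi]
  simp

lemma factorAt_of_getElem {u : List A} {ξ : ℕ → A} {k : ℕ}
    (h : ∀ i (hi : i < u.length), u[i] = ξ (k + i)) : FactorAt u ξ k := by
  apply List.ext_getElem (by simp)
  intro i h1 h2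
  simpa using h i h1

lemma prefixOfInf_pref (ξ : ℕ → A) (n : ℕ) : PrefixOfInf (pref ξ n) ξ := by
  apply factorAt_of_getElem
  intro i hi
  simp only [pref_length] at hi
  rw [pref_getElem ξ hi]
  simp

lemma prefixOfInf_eq_pref {u : List A} {ξ : ℕ → A} (h : PrefixOfInf u ξ) :
    u = pref ξ u.length := by
  apply List.ext_getElem (by simp)
  intro i h1 h2
  rw [pref_getElem ξ (by simpa using h2)]
  simpa using factorAt_getElem h h1

lemma pref_take {ξ : ℕ → A} {m n : ℕ} (h : m ≤ n) : (pref ξ n).take m = pref ξ m := by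
  apply List.ext_getElem (by simp; omega)
  intro i h1 h2
  have hi : i < m := by simpa using h2
  rw [List.getElem_take, pref_getElem ξ (by omega : i < n), pref_getElem ξ hi]

lemma pref_prefix {ξ : ℕ → A} {m n : ℕ} (h : m ≤ n) : pref ξ m <+: pref ξ n := by
  rw [List.prefix_iff_eq_take, pref_length, pref_take h]

lemma occ_pref_iff {u : List A} {ξ : ℕ → A} {j n : ℕ} (hle : j + u.length ≤ n) :
    Occ u (pref ξ n) j ↔ FactorAt u ξ j := by
  constructor
  · intro h
    apply factorAt_of_getElem
    intro i hi
    rw [occ_getElem h hi (by simp; omega), pref_getElem ξ (by omega)]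
  · intro h
    apply occ_of_getElem (by simpa using hle)
    intro i hi
    rw [pref_getElem ξ (by omega)]
    exact factorAt_getElem h hi

lemma shift_iterate_apply (ξ : ℕ → A) (k n : ℕ) : (shift^[k] ξ) n = ξ (n + k) := by
  induction k generalizing n with
  | zero => simp
  | succ k ih =>
    rw [Function.iterate_succ_apply']
    show (shift^[k] ξ) (n + 1) = ξ (n + (k + 1))
    rw [ih]
    congr 1
    omega

lemma shift_iterate_mem {Ξ : Set (ℕ → A)} (hΞ : IsSubshift Ξ) {ξ : ℕ → A} (hξ : ξ ∈ Ξ)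
    (k : ℕ) : shift^[k] ξ ∈ Ξ := by
  induction k with
  | zero => simpa
  | succ k ih =>
    rw [Function.iterate_succ_apply']
    exact hΞ.shift_mem _ ih

lemma factorAt_shift_iterate {u : List A} {ξ : ℕ → A} {k j : ℕ} :
    FactorAt u (shift^[k] ξ) j ↔ FactorAt u ξ (k + j) := by
  constructor
  · intro h
    apply factorAt_of_getElem
    intro i hi
    have := factorAt_getElem h hi
    rw [shift_iterate_apply] at this
    rw [this]
    congr 1
    omega
  · intro h
    apply factorAt_of_getElem
    intro i hi
    rw [shift_iterate_apply, factorAt_getElem h hi]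
    congr 1
    omega

lemma factorAt_mono_prefix {u v : List A} {ξ : ℕ → A} {k : ℕ} (h : FactorAt u ξ k)
    (hp : v <+: u) : FactorAt v ξ k := by
  apply factorAt_of_getElem
  intro i hi
  rw [hp.getElem (by omega)]
  exact factorAt_getElem h (by have := hp.length_le; omega)

lemma factorAt_of_occ {v w : List A} {ξ : ℕ → A} {k j : ℕ} (hv : v ≠ [])
    (h : FactorAt w ξ k) (ho : Occ v w j) : FactorAt v ξ (k + j) := by
  have hle := occ_le hv ho
  apply factorAt_of_getElem
  intro i hi
  rw [occ_getElem ho hi (by omega), factorAt_getElem h (by omega)]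
  congr 1
  omega

lemma mem_language_of_factorAt {Ξ : Set (ℕ → A)} {ξ : ℕ → A} {k : ℕ} {u : List A}
    (hξ : ξ ∈ Ξ) (h : FactorAt u ξ k) : u ∈ language Ξ := ⟨ξ, hξ, k, h⟩

lemma pref_mem_language {Ξ : Set (ℕ → A)} {ξ : ℕ → A} (hξ : ξ ∈ Ξ) (n : ℕ) :
    pref ξ n ∈ language Ξ := ⟨ξ, hξ, 0, prefixOfInf_pref ξ n⟩

lemma prefix_mem_language {Ξ : Set (ℕ → A)} {u v : List A} (hu : u ∈ language Ξ)
    (h : v <+: u) : v ∈ language Ξ := by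
  obtain ⟨ξ, hξ, k, hk⟩ := hu
  exact ⟨ξ, hξ, k, factorAt_mono_prefix hk h⟩

lemma exists_prefixOfInf {Ξ : Set (ℕ → A)} (hΞ : IsSubshift Ξ) {u : List A}
    (hu : u ∈ language Ξ) : ∃ ξ ∈ Ξ, PrefixOfInf u ξ := by
  obtain ⟨ξ, hξ, k, hk⟩ := hu
  refine ⟨shift^[k] ξ, shift_iterate_mem hΞ hξ k, factorAt_shift_iterate.mpr ?_⟩
  simpa using hk

lemma closure_agree [DiscreteTopology A] {S : Set (ℕ → A)} {ζ : ℕ → A}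
    (h : ζ ∈ closure S) (m : ℕ) : ∃ η ∈ S, ∀ i < m, η i = ζ i := by
  have hopen : IsOpen {η : ℕ → A | ∀ i < m, η i = ζ i} := by
    have heq : {η : ℕ → A | ∀ i < m, η i = ζ i} =
        ⋂ i ∈ Finset.range m, (fun η : ℕ → A => η i) ⁻¹' ({ζ i} : Set A) := by
      ext η
      simp [Finset.mem_range]
    rw [heq]
    apply isOpen_biInter_finset
    intro i _
    exact IsOpen.preimage (continuous_apply (A := fun _ : ℕ => A) i)
      (isOpen_discrete ({ζ i} : Set A))
  obtain ⟨η, hη1, hη2⟩ := mem_closure_iff.mp h _ hopen (fun i _ => rfl)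
  exact ⟨η, hη2, hη1⟩

lemma minimal_factorAt [DiscreteTopology A] {Ξ : Set (ℕ → A)} (hΞ : IsSubshift Ξ)
    (hmin : IsMinimal Ξ) {ξ : ℕ → A} (hξ : ξ ∈ Ξ) {u : List A} (hu : u ∈ language Ξ) :
    ∃ k, FactorAt u ξ k := by
  obtain ⟨ζ, hζ, j, hj⟩ := hu
  have hcl : ζ ∈ closure (Set.range fun n => shift^[n] ξ) := hmin ξ hξ hζ
  obtain ⟨η, ⟨n, rfl⟩, hagree⟩ := closure_agree hcl (j + u.length)
  refine ⟨n + j, factorAt_shift_iterate.mp ?_⟩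
  apply factorAt_of_getElem
  intro i hi
  rw [factorAt_getElem hj hi]
  exact (hagree (j + i) (by omega)).symm

lemma exists_pos_factorAt [DiscreteTopology A] {Ξ : Set (ℕ → A)} (hΞ : IsSubshift Ξ)
    (hmin : IsMinimal Ξ) {ξ : ℕ → A} (hξ : ξ ∈ Ξ) {u : List A} (hu : u ∈ language Ξ) :
    ∃ k, 0 < k ∧ FactorAt u ξ k := by
  obtain ⟨k, hk⟩ := minimal_factorAt hΞ hmin (hΞ.shift_mem ξ hξ) hu
  refine ⟨1 + k, by omega, ?_⟩
  have : FactorAt u (shift^[1] ξ) k := by simpa using hk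
  exact factorAt_shift_iterate.mp this

lemma cfr_from_xi [DiscreteTopology A] {Ξ : Set (ℕ → A)} (hΞ : IsSubshift Ξ)
    (hmin : IsMinimal Ξ) {ξ : ℕ → A} {u : List A} (hξ : ξ ∈ Ξ) (hu0 : u ≠ [])
    (hpre : PrefixOfInf u ξ) :
    ∃ k, 0 < k ∧ FactorAt u ξ k ∧ (∀ j, 0 < j → FactorAt u ξ j → k ≤ j) ∧
      CFRin (language Ξ) u (pref ξ (k + u.length)) := by
  classical
  have hul : u ∈ language Ξ := ⟨ξ, hξ, 0, hpre⟩
  have hex : ∃ k, 0 < k ∧ FactorAt u ξ k := exists_pos_factorAt hΞ hmin hξ hul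
  obtain ⟨hk0, hkf⟩ := Nat.find_spec hex
  set k := Nat.find hex with hk
  have hkmin : ∀ j, 0 < j → FactorAt u ξ j → k ≤ j := fun j hj hjf => Nat.find_le ⟨hj, hjf⟩
  set W := pref ξ (k + u.length) with hW
  have hWlen : W.length = k + u.length := pref_length ξ _
  have hWL : W ∈ language Ξ := pref_mem_language hξ _
  have hu0' : 0 < u.length := List.length_pos_iff.mpr hu0
  have hupre : u <+: W := by
    rw [prefixOfInf_eq_pref hpre]
    exact pref_prefix (by omega)
  have hocck : Occ u W k := (occ_pref_iff le_rfl).mpr hkf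
  refine ⟨k, hk0, hkf, hkmin, hWL, ?_⟩
  apply isCFR_of_occ hu0 hupre
  · apply suffix_of_occ hu0
    rw [hWlen, Nat.add_sub_cancel]
    exact hocck
  · omega
  · intro j hj
    have hjle := occ_le hu0 hj
    have hjf : FactorAt u ξ j := (occ_pref_iff (by omega)).mp hj
    by_cases hj0 : j = 0
    · left; exact hj0
    · right
      have := hkmin j (Nat.pos_of_ne_zero hj0) hjf
      omega

lemma exists_cfr_extending [DiscreteTopology A] {Ξ : Set (ℕ → A)} (hΞ : IsSubshift Ξ)
    (hmin : IsMinimal Ξ) {u v : List A} (hu0 : u ≠ []) (hv : v ∈ language Ξ)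
    (huv : u <+: v) (hocc : ∀ j, Occ u v j → j = 0 ∨ j = v.length - u.length) :
    ∃ u', CFRin (language Ξ) u u' ∧ v <+: u' := by
  obtain ⟨ξ, hξ, hvpre⟩ := exists_prefixOfInf hΞ hv
  have hupre : PrefixOfInf u ξ := factorAt_mono_prefix hvpre huv
  obtain ⟨k, hk0, hkf, hkmin, hcfr⟩ := cfr_from_xi hΞ hmin hξ hu0 hupre
  refine ⟨_, hcfr, ?_⟩
  have hulv := huv.length_le
  rcases le_or_gt v.length (k + u.length) with hle | hlt
  · have := pref_prefix (ξ := ξ) hle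
    rwa [← prefixOfInf_eq_pref hvpre] at this
  · exfalso
    have hov : Occ u v k := by
      have : Occ u (pref ξ v.length) k := (occ_pref_iff (by omega)).mpr hkf
      rwa [← prefixOfInf_eq_pref hvpre] at this
    rcases hocc k hov with h | h <;> omega

lemma exists_second_cfr [DiscreteTopology A] {Ξ : Set (ℕ → A)} (hΞ : IsSubshift Ξ)
    (hmin : IsMinimal Ξ) (hap : Aperiodic Ξ) {u u' : List A} (hu : u ∈ language Ξ)
    (h1 : CFRin (language Ξ) u u') :
    ∃ u'', CFRin (language Ξ) u u'' ∧ u'' ≠ u' := by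
  classical
  by_cases hu0 : u = []
  · subst hu0
    obtain ⟨ξ₀, hξ₀⟩ := hΞ.nonempty
    by_cases hconst : ∀ n, ξ₀ (n + 1) = ξ₀ n
    · exfalso
      have : shift^[1] ξ₀ = ξ₀ := by
        funext n
        rw [shift_iterate_apply]
        exact hconst n
      exact one_ne_zero (hap ξ₀ hξ₀ 1 this)
    · push_neg at hconst
      obtain ⟨n, hn⟩ := hconst
      have hmem : ∀ m, [ξ₀ m] ∈ language Ξ := by
        intro m
        refine mem_language_of_factorAt (k := m) hξ₀ (factorAt_of_getElem ?_)
        intro i hi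
        simp only [List.length_singleton] at hi
        interval_cases i
        simp
      have hcfr : ∀ m, CFRin (language Ξ) [] [ξ₀ m] := by
        intro m
        exact ⟨hmem m, by rw [IsCFR, if_pos rfl]; rfl⟩
      by_cases h : [ξ₀ n] = u'
      · refine ⟨[ξ₀ (n + 1)], hcfr (n + 1), ?_⟩
        intro hc
        rw [← h] at hc
        exact hn (List.singleton_injective hc)
      · exact ⟨[ξ₀ n], hcfr n, h⟩
  · by_contra hc
    push_neg at hc
    have hall : ∀ u'', CFRin (language Ξ) u u'' → u'' = u' := by
      intro u'' h''
      by_contra hne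
      exact hne (by
        have := hc u'' h''
        exact not_not.mp (fun hx => hx this))
    obtain ⟨hu'L, hu'cfr⟩ := h1
    have hlt := cfr_length_lt hu0 hu'cfr
    set p := u'.length - u.length with hp
    have hp0 : 0 < p := by omega
    have claimC : ∀ η, η ∈ Ξ → PrefixOfInf u η → PrefixOfInf u' η := by
      intro η hη hpre
      obtain ⟨k, hk0, hkf, hkmin, hcfrk⟩ := cfr_from_xi hΞ hmin hη hu0 hpre
      have heq := hall _ hcfrk
      rw [← heq]
      exact prefixOfInf_pref η _
    obtain ⟨ξ, hξ, hupre⟩ := exists_prefixOfInf hΞ hu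
    have claimD : ∀ m, FactorAt u' ξ (m * p) := by
      intro m
      induction m with
      | zero => rw [Nat.zero_mul]; exact claimC ξ hξ hupre
      | succ m ih =>
        have hsuf : Occ u u' p := by
          have := occ_suffix (cfr_suffix hu0 hu'cfr)
          rwa [← hp] at this
        have hfa : FactorAt u ξ (m * p + p) := factorAt_of_occ hu0 ih hsuf
        have hη : shift^[m * p + p] ξ ∈ Ξ := shift_iterate_mem hΞ hξ _
        have hpre2 : PrefixOfInf u (shift^[m * p + p] ξ) := by
          apply factorAt_shift_iterate.mpr
          simpa using hfa
        have hpre3 := claimC _ hη hpre2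
        have : FactorAt u' ξ (m * p + p) := by
          simpa using factorAt_shift_iterate.mp hpre3
        rwa [show (m + 1) * p = m * p + p by ring]
    have claimE : shift^[p] ξ = ξ := by
      funext n
      rw [shift_iterate_apply]
      set m := n / p with hm
      set r := n % p with hr
      have h1' : m * p + r = n := Nat.div_add_mod' n p
      have hrlt : r < p := Nat.mod_lt n hp0
      have h2' : (m + 1) * p + r = n + p := by
        rw [Nat.succ_mul]
        omega
      have hi : r < u'.length := by omega
      have e1 := factorAt_getElem (claimD m) hi
      have e2 := factorAt_getElem (claimD (m + 1)) hi
      rw [← h2', ← e2, e1, h1']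
    have := hap ξ hξ p claimE
    omega


/-! ### `phi1` and pairs of complete first returns -/

lemma phi1_eq {u₁ u₂ : List A} {l : ℕ} (h : u₁.take l = u₂.take l) (h1 : l < u₁.length)
    (h2 : l < u₂.length) (hne : u₁[l] ≠ u₂[l]) :
    phi1 u₁ u₂ = (u₁.take (l + 1), u₂.take (l + 1)) := by
  rw [phi1, lcpLenW_eq h h1 h2 hne]

lemma prefix_getElem_concat {r x : List A} {b : A} (h : r ++ [b] <+: x) :
    x[r.length]'(by have := h.length_le; simp at this; omega) = b := by
  rw [← h.getElem (by simp)]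
  simp

lemma length_lt_of_proper_prefix {u v : List A} (h : u <+: v) (hne : u ≠ v) :
    u.length < v.length := by
  rcases lt_or_eq_of_le h.length_le with h' | h'
  · exact h'
  · exact absurd (h.eq_of_length h') hne

lemma prefix_of_take {u x : List A} {l : ℕ} (h : u <+: x) (hl : u.length ≤ l) :
    u <+: x.take l := by
  rw [List.prefix_iff_eq_take] at h ⊢
  rw [List.take_take, min_eq_left hl, ← h]

lemma take_eq_of_prefix {u x : List A} {l : ℕ} (h : u <+: x) (hl : l ≤ u.length) :
    x.take l = u.take l := by
  rw [List.prefix_iff_eq_take] at h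
  rw [h, List.take_take, min_eq_left hl]

lemma cfr_pair_spec {u u₁ u₂ : List A} (h1 : IsCFR u u₁) (h2 : IsCFR u u₂)
    (hne : u₁ ≠ u₂) :
    u.length ≤ lcpLenW u₁ u₂ ∧ lcpLenW u₁ u₂ < u₁.length ∧ lcpLenW u₁ u₂ < u₂.length ∧
      u₁.take (lcpLenW u₁ u₂) = u₂.take (lcpLenW u₁ u₂) ∧
      ∀ (hl1 : lcpLenW u₁ u₂ < u₁.length) (hl2 : lcpLenW u₁ u₂ < u₂.length),
        u₁[lcpLenW u₁ u₂] ≠ u₂[lcpLenW u₁ u₂] := by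
  by_cases hu0 : u = []
  · subst hu0
    have hl1 := cfr_nil_length h1
    have hl2 := cfr_nil_length h2
    have hnp : ¬ u₁ <+: u₂ := fun hp => hne (hp.eq_of_length (by omega))
    have hnp' : ¬ u₂ <+: u₁ := fun hp => hne (hp.eq_of_length (by omega)).symm
    obtain ⟨a1, a2, a3, a4⟩ := lcp_spec hnp hnp'
    exact ⟨by simp, a1, a2, a3, a4⟩
  · have hnp := cfr_not_prefix hu0 h1 h2 hne
    have hnp' := cfr_not_prefix hu0 h2 h1 (Ne.symm hne)
    obtain ⟨a1, a2, a3, a4⟩ := lcp_spec hnp hnp'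
    exact ⟨lcpLenW_ge (cfr_prefix hu0 h1) (cfr_prefix hu0 h2), a1, a2, a3, a4⟩

lemma priv_prefix_eq {x y x₁ : List A} {l : ℕ} (hx : IsPrivileged x) (hy : IsPrivileged y)
    (hcfr : IsCFR x x₁) (hxy : x <+: y) (hyr : y.length ≤ l) (hy1 : y <+: x₁)
    (hl : l < x₁.length) : x = y := by
  by_contra hne
  by_cases hx0 : x = []
  · subst hx0
    have h1 := cfr_nil_length hcfr
    have : y = [] := List.length_eq_zero_iff.mp (by omega)
    exact hne this.symm
  · have hsuf : x <:+ y := priv_prefix_suffix hy hx hxy hne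
    have hxlt : x.length < y.length := length_lt_of_proper_prefix hxy hne
    have hocc : Occ x x₁ (y.length - x.length) := occ_of_prefix hx0 (occ_suffix hsuf) hy1
    have hyl : y.length ≤ x₁.length := hy1.length_le
    have hlt := cfr_length_lt hx0 hcfr
    rcases (cfr_occ_iff hx0 hcfr _).mp hocc with h | h <;> omega

/-- Under balancedness, a complete first return to `u` is determined by one letter past
the branching point of a distinct pair of complete first returns. -/
lemma cfr_determined {L : Set (List A)} (hpc : ∀ u v : List A, u ∈ L → v <+: u → v ∈ L)
    (hbal : RSBalanced L) {u x y x' : List A} (hu0 : u ≠ []) (hupriv : IsPrivileged u)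
    (hx : CFRin L u x) (hy : CFRin L u y) (hx' : CFRin L u x') {l : ℕ}
    (hrt : x.take l = y.take l) (hlx : l < x.length) (hly : l < y.length)
    (hnel : x[l] ≠ y[l]) (hl : x.take (l + 1) = x'.take (l + 1)) : x = x' := by
  by_contra hxx'
  have hxpre : u <+: x := cfr_prefix hu0 hx.2
  have hypre : u <+: y := cfr_prefix hu0 hy.2
  have hul : u.length ≤ l := by
    by_contra hc
    push_neg at hc
    apply hnel
    rw [← hxpre.getElem (by omega), ← hypre.getElem (by omega)]
  obtain ⟨hul₂, hlx₂, hlx'₂, hrt₂, hne₂⟩ := cfr_pair_spec hx.2 hx'.2 hxx'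
  set l₂ := lcpLenW x x' with hl₂def
  have hll₂ : l + 1 ≤ l₂ := by
    have : x.take (l + 1) <+: x' := by
      rw [hl]; exact List.take_prefix _ _
    have h2 := lcpLenW_ge (List.take_prefix (l + 1) x) this
    rwa [List.length_take, min_eq_left (by omega)] at h2
  have huL : u ∈ L := hpc x u hx.1 hxpre
  obtain ⟨rr, hrr, hruniq⟩ := hbal u hupriv huL x ⟨hx.1, hx.2⟩
  have hxne : x.take l ≠ x := fun hc => by
    have := congrArg List.length hc
    simp [List.length_take] at this
    omega
  have hxne₂ : x.take l₂ ≠ x := fun hc => by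
    have := congrArg List.length hc
    simp [List.length_take] at this
    omega
  have hcand1 : RightSpecial L (x.take l) ∧ u <+: x.take l ∧ PPrefix (x.take l) x := by
    refine ⟨⟨hpc x _ hx.1 (List.take_prefix _ _), x[l], y[l], hnel, ?_, ?_⟩,
      prefix_of_take hxpre hul, List.take_prefix _ _, hxne⟩
    · rw [← take_succ_eq hlx]
      exact hpc x _ hx.1 (List.take_prefix _ _)
    · rw [hrt, ← take_succ_eq hly]
      exact hpc y _ hy.1 (List.take_prefix _ _)
  have hcand2 : RightSpecial L (x.take l₂) ∧ u <+: x.take l₂ ∧ PPrefix (x.take l₂) x := by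
    refine ⟨⟨hpc x _ hx.1 (List.take_prefix _ _), x[l₂], x'[l₂], hne₂ hlx₂ hlx'₂, ?_, ?_⟩,
      prefix_of_take hxpre (by omega), List.take_prefix _ _, hxne₂⟩
    · rw [← take_succ_eq hlx₂]
      exact hpc x _ hx.1 (List.take_prefix _ _)
    · rw [hrt₂, ← take_succ_eq hlx'₂]
      exact hpc x' _ hx'.1 (List.take_prefix _ _)
  have e1 := hruniq _ hcand1
  have e2 := hruniq _ hcand2
  have : x.take l = x.take l₂ := e1.trans e2.symm
  have := congrArg List.length this
  simp only [List.length_take] at this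
  omega

/-- Balancedness implies injectivity of `φ⁽¹⁾`. -/
lemma injective_of_balanced {L : Set (List A)}
    (hpc : ∀ u v : List A, u ∈ L → v <+: u → v ∈ L) (hbal : RSBalanced L)
    {u₁ u₂ w₁ w₂ : List A} (h1 : TildeH1 L u₁ u₂) (h2 : TildeH1 L w₁ w₂)
    (heq : phi1 u₁ u₂ = phi1 w₁ w₂) : (u₁, u₂) = (w₁, w₂) := by
  obtain ⟨hneu, u, hupriv, hcu₁, hcu₂⟩ := h1
  obtain ⟨hnew, w, hwpriv, hcw₁, hcw₂⟩ := h2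
  obtain ⟨hul, hlu₁, hlu₂, hut, hune⟩ := cfr_pair_spec hcu₁.2 hcu₂.2 hneu
  obtain ⟨hwl, hlw₁, hlw₂, hwt, hwne⟩ := cfr_pair_spec hcw₁.2 hcw₂.2 hnew
  rw [phi1, phi1, Prod.mk.injEq] at heq
  obtain ⟨heq1, heq2⟩ := heq
  -- the branching indices agree
  have hll' : lcpLenW w₁ w₂ = lcpLenW u₁ u₂ := by
    have := congrArg List.length heq1
    simp only [List.length_take] at this
    omega
  rw [hll'] at hwl hlw₁ hlw₂ hwt hwne heq1 heq2
  set l := lcpLenW u₁ u₂ with hldef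
  -- the privileged words agree
  have hupre₁ : u <+: u₁ ∧ u <+: u₂ := by
    by_cases hu0 : u = []
    · subst hu0; exact ⟨List.nil_prefix, List.nil_prefix⟩
    · exact ⟨cfr_prefix hu0 hcu₁.2, cfr_prefix hu0 hcu₂.2⟩
  have hwpre₁ : w <+: w₁ ∧ w <+: w₂ := by
    by_cases hw0 : w = []
    · subst hw0; exact ⟨List.nil_prefix, List.nil_prefix⟩
    · exact ⟨cfr_prefix hw0 hcw₁.2, cfr_prefix hw0 hcw₂.2⟩
  have hur : u <+: u₁.take l := prefix_of_take hupre₁.1 hul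
  have hwr : w <+: w₁.take l := prefix_of_take hwpre₁.1 hwl
  have hrr : u₁.take l = w₁.take l := by
    have e1 : u₁.take l = (u₁.take (l + 1)).take l := by
      rw [List.take_take, min_eq_left (by omega)]
    have e2 : w₁.take l = (w₁.take (l + 1)).take l := by
      rw [List.take_take, min_eq_left (by omega)]
    rw [e1, e2, heq1]
  have huw : u = w := by
    have hwr' : w <+: u₁.take l := by rw [hrr]; exact hwr
    rcases le_total u.length w.length with hle | hle
    · have huw' : u <+: w := List.prefix_of_prefix_length_le hur hwr' hle
      exact priv_prefix_eq hupriv hwpriv hcu₁.2 huw'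
        (by rw [List.prefix_iff_eq_take] at hwr'
            have := congrArg List.length hwr'
            simp only [List.length_take] at this
            omega)
        (hwr'.trans (List.take_prefix _ _)) hlu₁
    · have hur' : u <+: w₁.take l := by rw [← hrr]; exact hur
      have hwu' : w <+: u := List.prefix_of_prefix_length_le hwr' hur hle
      exact (priv_prefix_eq hwpriv hupriv hcw₁.2 hwu'
        (by rw [List.prefix_iff_eq_take] at hur'
            have := congrArg List.length hur'
            simp only [List.length_take] at this
            omega)
        (hur'.trans (List.take_prefix _ _)) hlw₁).symm
  subst huw
  -- now both pairs are complete first returns to `u`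
  by_cases hu0 : u = []
  · subst hu0
    have e₁ := cfr_nil_length hcu₁.2
    have e₂ := cfr_nil_length hcu₂.2
    have f₁ := cfr_nil_length hcw₁.2
    have f₂ := cfr_nil_length hcw₂.2
    have g1 : u₁ = w₁ := by
      have := heq1
      rwa [List.take_of_length_le (by omega), List.take_of_length_le (by omega)] at this
    have g2 : u₂ = w₂ := by
      have := heq2
      rwa [List.take_of_length_le (by omega), List.take_of_length_le (by omega)] at this
    rw [g1, g2]
  · have g1 : u₁ = w₁ :=
      cfr_determined hpc hbal hu0 hupriv hcu₁ hcu₂ hcw₁ hut hlu₁ hlu₂ (hune hlu₁ hlu₂) heq1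
    have g2 : u₂ = w₂ :=
      cfr_determined hpc hbal hu0 hupriv hcu₂ hcu₁ hcw₂ hut.symm hlu₂ hlu₁
        (Ne.symm (hune hlu₁ hlu₂)) heq2
    rw [g1, g2]


/-- Surjectivity of `φ⁽¹⁾`. -/
lemma phi1_surjective [DiscreteTopology A] {Ξ : Set (ℕ → A)} (hΞ : IsSubshift Ξ)
    (hmin : IsMinimal Ξ) {v₁ v₂ : List A} (h : H1 (language Ξ) v₁ v₂) :
    ∃ u₁ u₂, TildeH1 (language Ξ) u₁ u₂ ∧ phi1 u₁ u₂ = (v₁, v₂) := by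
  obtain ⟨hv₁, hv₂, hne, w, a, b, rfl, rfl⟩ := h
  have hab : a ≠ b := fun hc => hne (by rw [hc])
  by_cases hw : w = []
  · subst hw
    simp only [List.nil_append] at *
    have hcfra : CFRin (language Ξ) [] [a] := ⟨hv₁, by rw [IsCFR, if_pos rfl]; rfl⟩
    have hcfrb : CFRin (language Ξ) [] [b] := ⟨hv₂, by rw [IsCFR, if_pos rfl]; rfl⟩
    refine ⟨[a], [b], ⟨fun hc => hab (List.singleton_injective hc), [], nil_privileged,
      hcfra, hcfrb⟩, ?_⟩
    rw [phi1_eq (u₁ := [a]) (u₂ := [b]) (l := 0) rfl (by simp) (by simp)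
      (by simpa using hab)]
    simp
  · obtain ⟨u, hupriv, hu0, hupre, hocc⟩ := exists_good_priv_prefix hw
    have hwa : w <+: w ++ [a] := ⟨[a], rfl⟩
    have hwb : w <+: w ++ [b] := ⟨[b], rfl⟩
    obtain ⟨u₁, hcfr₁, hpre₁⟩ := exists_cfr_extending hΞ hmin hu0 hv₁ (hupre.trans hwa)
      (fun j hj => occ_append_elim hu0 hj hocc)
    obtain ⟨u₂, hcfr₂, hpre₂⟩ := exists_cfr_extending hΞ hmin hu0 hv₂ (hupre.trans hwb)
      (fun j hj => occ_append_elim hu0 hj hocc)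
    have hl1 : w.length < u₁.length := by
      have := hpre₁.length_le; simp only [List.length_append, List.length_singleton] at this
      omega
    have hl2 : w.length < u₂.length := by
      have := hpre₂.length_le; simp only [List.length_append, List.length_singleton] at this
      omega
    have ha : u₁[w.length] = a := prefix_getElem_concat hpre₁
    have hb : u₂[w.length] = b := prefix_getElem_concat hpre₂
    have htk : u₁.take w.length = u₂.take w.length := by
      rw [take_eq_of_prefix (hwa.trans hpre₁) (by simp),
        take_eq_of_prefix (hwb.trans hpre₂) (by simp)]
    have hne12 : u₁ ≠ u₂ := by
      intro hc
      subst hc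
      rw [ha] at hb
      exact hab hb
    refine ⟨u₁, u₂, ⟨hne12, u, hupriv, hcfr₁, hcfr₂⟩, ?_⟩
    rw [phi1_eq htk hl1 hl2 (by rw [ha, hb]; exact hab)]
    have e1 : u₁.take (w.length + 1) = w ++ [a] := by
      have h := List.prefix_iff_eq_take.mp hpre₁
      rw [List.length_append, List.length_singleton] at h
      exact h.symm
    have e2 : u₂.take (w.length + 1) = w ++ [b] := by
      have h := List.prefix_iff_eq_take.mp hpre₂
      rw [List.length_append, List.length_singleton] at h
      exact h.symm
    rw [e1, e2]

/-- Injectivity of `φ⁽¹⁾` implies balancedness. -/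
lemma balanced_of_injective [DiscreteTopology A] {Ξ : Set (ℕ → A)} (hΞ : IsSubshift Ξ)
    (hmin : IsMinimal Ξ) (hap : Aperiodic Ξ)
    (hinj : ∀ u₁ u₂ w₁ w₂, TildeH1 (language Ξ) u₁ u₂ → TildeH1 (language Ξ) w₁ w₂ →
      phi1 u₁ u₂ = phi1 w₁ w₂ → (u₁, u₂) = (w₁, w₂)) :
    RSBalanced (language Ξ) := by
  intro u hupriv huL u' hcfr'
  -- existence of a right-special word
  obtain ⟨u'', hcfr'', hne''⟩ := exists_second_cfr hΞ hmin hap huL hcfr'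
  obtain ⟨hul, hlu', hlu'', hut, hune⟩ := cfr_pair_spec hcfr'.2 hcfr''.2 (Ne.symm hne'')
  set l₀ := lcpLenW u' u'' with hl₀
  have hu'pre : u <+: u' := by
    by_cases hu0 : u = []
    · subst hu0; exact List.nil_prefix
    · exact cfr_prefix hu0 hcfr'.2
  have hcand : RightSpecial (language Ξ) (u'.take l₀) ∧ u <+: u'.take l₀ ∧
      PPrefix (u'.take l₀) u' := by
    refine ⟨⟨prefix_mem_language hcfr'.1 (List.take_prefix _ _), u'[l₀], u''[l₀],
      hune hlu' hlu'', ?_, ?_⟩, prefix_of_take hu'pre hul, List.take_prefix _ _, ?_⟩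
    · rw [← take_succ_eq hlu']
      exact prefix_mem_language hcfr'.1 (List.take_prefix _ _)
    · rw [hut, ← take_succ_eq hlu'']
      exact prefix_mem_language hcfr''.1 (List.take_prefix _ _)
    · intro hc
      have := congrArg List.length hc
      simp only [List.length_take] at this
      omega
  refine ⟨u'.take l₀, hcand, ?_⟩
  -- uniqueness
  have key : ∀ r₁ r₂ : List A,
      (RightSpecial (language Ξ) r₁ ∧ u <+: r₁ ∧ PPrefix r₁ u') →
      (RightSpecial (language Ξ) r₂ ∧ u <+: r₂ ∧ PPrefix r₂ u') →
      r₁.length < r₂.length → False := by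
    intro r₁ r₂ ⟨hrs₁, hur₁, hpp₁⟩ ⟨hrs₂, hur₂, hpp₂⟩ hlen
    by_cases hu0 : u = []
    · subst hu0
      have := cfr_nil_length hcfr'.2
      have e1 := length_lt_of_proper_prefix hpp₁.1 hpp₁.2
      have e2 := length_lt_of_proper_prefix hpp₂.1 hpp₂.2
      omega
    -- occurrences of u inside r₁, r₂ are only at position 0
    have honce : ∀ r : List A, r <+: u' → r ≠ u' → ∀ j, Occ u r j → j = 0 := by
      intro r hru hrne j hj
      have hjle := occ_le hu0 hj
      have hrlt := length_lt_of_proper_prefix hru hrne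
      have hju' : Occ u u' j := occ_of_prefix hu0 hj hru
      rcases (cfr_occ_iff hu0 hcfr'.2 j).mp hju' with h | h
      · exact h
      · exfalso
        have := cfr_length_lt hu0 hcfr'.2
        omega
    have hr₂lt := length_lt_of_proper_prefix hpp₂.1 hpp₂.2
    have hr₁lt : r₁.length < r₂.length := hlen
    set l := r₁.length with hldef
    have hlu : l < u'.length := by omega
    have ha' : r₁ = u'.take l := List.prefix_iff_eq_take.mp hpp₁.1
    -- a branching letter at r₁ distinct from the letter of u'
    obtain ⟨hr₁L, c, d, hcd, hc, hd⟩ := hrs₁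
    have hbex : ∃ b : A, b ≠ u'[l] ∧ r₁ ++ [b] ∈ language Ξ := by
      by_cases hca : c = u'[l]
      · exact ⟨d, fun hda => hcd (by rw [hca, hda]), hd⟩
      · exact ⟨c, hca, hc⟩
    obtain ⟨b, hba, hbL⟩ := hbex
    obtain ⟨ub, hubcfr, hubpre⟩ := exists_cfr_extending hΞ hmin hu0 hbL
      (hur₁.trans ⟨[b], rfl⟩)
      (fun j hj => occ_append_elim hu0 hj (honce r₁ hpp₁.1 hpp₁.2 ))
    -- a branching letter at r₂ distinct from the letter of u'
    obtain ⟨hr₂L, c', d', hcd', hc', hd'⟩ := hrs₂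
    have hbex' : ∃ b' : A, b' ≠ u'[r₂.length] ∧ r₂ ++ [b'] ∈ language Ξ := by
      by_cases hca : c' = u'[r₂.length]
      · exact ⟨d', fun hda => hcd' (by rw [hca, hda]), hd'⟩
      · exact ⟨c', hca, hc'⟩
    obtain ⟨b', hba', hbL'⟩ := hbex'
    obtain ⟨w₁, hw₁cfr, hw₁pre⟩ := exists_cfr_extending hΞ hmin hu0 hbL'
      (hur₂.trans ⟨[b'], rfl⟩)
      (fun j hj => occ_append_elim hu0 hj (honce r₂ hpp₂.1 hpp₂.2))
    -- lengths
    have hlub : l < ub.length := by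
      have := hubpre.length_le
      simp only [List.length_append, List.length_singleton] at this
      omega
    have hlw₁ : l < w₁.length := by
      have := hw₁pre.length_le
      simp only [List.length_append, List.length_singleton] at this
      omega
    -- getElem values at position l
    have hubl : ub[l] = b := prefix_getElem_concat hubpre
    have hr₂pre : r₂ <+: w₁ := (List.prefix_append r₂ [b']).trans hw₁pre
    have hr₂u' : r₂ = u'.take r₂.length := List.prefix_iff_eq_take.mp hpp₂.1
    have hw₁l : w₁[l] = u'[l] := by
      rw [← hr₂pre.getElem (by omega)]
      have : r₂[l]'(by omega) = (u'.take r₂.length)[l]'(by simp [List.length_take]; omega) := by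
        exact List.getElem_of_eq hr₂u' _
      rw [this, List.getElem_take]
    -- common prefixes of length l
    have hubtk : u'.take l = ub.take l := by
      have t1 : ub.take l = (r₁ ++ [b]).take l :=
        take_eq_of_prefix (l := l) hubpre
          (by simp only [List.length_append, List.length_singleton]; omega)
      have t2 : (r₁ ++ [b]).take l = r₁.take l :=
        take_eq_of_prefix (l := l) (List.prefix_append r₁ [b]) (by omega)
      rw [t1, t2, ← ha']
      exact (List.take_of_length_le (by omega)).symm
    have hw₁tk : u'.take l = w₁.take l := by
      rw [take_eq_of_prefix hr₂pre (by omega)]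
      have heq2 : r₂.take l = u'.take l := by
        rw [hr₂u', List.take_take, min_eq_left (by omega)]
      rw [heq2]
    -- the two pairs
    have hpair1 : TildeH1 (language Ξ) u' ub := by
      refine ⟨?_, u, hupriv, hcfr', hubcfr⟩
      intro hcEq
      subst hcEq
      exact hba hubl.symm
    have hpair2 : TildeH1 (language Ξ) w₁ ub := by
      refine ⟨?_, u, hupriv, hw₁cfr, hubcfr⟩
      intro hcEq
      subst hcEq
      exact hba (hubl.symm.trans hw₁l)
    have hphi1 : phi1 u' ub = (u'.take (l + 1), ub.take (l + 1)) :=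
      phi1_eq hubtk hlu hlub (by rw [hubl]; exact fun hc => hba hc.symm)
    have hphi2 : phi1 w₁ ub = (w₁.take (l + 1), ub.take (l + 1)) :=
      phi1_eq (hw₁tk.symm.trans hubtk) hlw₁ hlub
        (by rw [hubl, hw₁l]; exact fun hc => hba hc.symm)
    have hfirst : u'.take (l + 1) = w₁.take (l + 1) := by
      rw [take_succ_eq hlu, take_succ_eq hlw₁, hw₁tk, hw₁l]
    have hinj' := hinj u' ub w₁ ub hpair1 hpair2 (by rw [hphi1, hphi2, hfirst])
    have hu'w₁ : u' = w₁ := (Prod.mk.injEq _ _ _ _ ▸ hinj').1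
    -- contradiction: at position r₂.length they differ
    apply hba'
    have : w₁[r₂.length]'(by rw [← hu'w₁]; omega) = b' := prefix_getElem_concat hw₁pre
    rw [← this]
    exact (List.getElem_of_eq hu'w₁ (by omega)).symm
  intro r hr
  rcases lt_trichotomy r.length (u'.take l₀).length with h | h | h
  · exact absurd (key r _ hr hcand h) id
  · exact (List.prefix_of_prefix_length_le hr.2.2.1 hcand.2.2.1 (le_of_eq h)).eq_of_length h
  · exact absurd (key _ r hcand hr h) id

end Aux






/-- The map `φ⁽¹⁾ : H̃⁽¹⁾ → H⁽¹⁾` is always surjective, and it is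
injective if and only if the subshift is right-special balanced. -/
theorem statement9 {A : Type*} [Fintype A] [DecidableEq A] [TopologicalSpace A]
    [DiscreteTopology A] (Ξ : Set (ℕ → A)) (hΞ : IsSubshift Ξ) (hmin : IsMinimal Ξ)
    (hap : Aperiodic Ξ) :
    (∀ v₁ v₂, H1 (language Ξ) v₁ v₂ →
        ∃ u₁ u₂, TildeH1 (language Ξ) u₁ u₂ ∧ phi1 u₁ u₂ = (v₁, v₂)) ∧
      ((∀ u₁ u₂ w₁ w₂, TildeH1 (language Ξ) u₁ u₂ → TildeH1 (language Ξ) w₁ w₂ →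
          phi1 u₁ u₂ = phi1 w₁ w₂ → (u₁, u₂) = (w₁, w₂)) ↔
        RSBalanced (language Ξ)) := by
  refine ⟨fun v₁ v₂ h => phi1_surjective hΞ hmin h, ?_, ?_⟩
  · exact fun hinj => balanced_of_injective hΞ hmin hap hinj
  · exact fun hbal u₁ u₂ w₁ w₂ h1 h2 heq =>
      injective_of_balanced (fun u v hu h => prefix_mem_language hu h) hbal h1 h2 heq

end Arx1111
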